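/- Binary choice posterior variance (Stage 1): Suppose (θ₁,θ₂) has prior covariance Σ with Σ₁₁ ≥ Σ₂₂, ω = θ₁ + θ₂, and the agent devotes all attention to θ₁ (i.e., acquires t units of unit-precision Gaussian information about θ₁). Then for t ≤ t₁* := (Σ₁₁ − Σ₂₂)/det(Σ), the posterior covariance matrix is (1/(1+Σ₁₁t))·[[Σ₁₁, Σ₁₂],[Σ₂₁, Σ₂₂ + det(Σ)t]], and the posterior variance of ω equals (Σ₁₁ + Σ₂₂ + 2Σ₁₂ + det(Σ)t)/(1 + Σ₁₁t). -/

import Mathlib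

open Matrix

theorem stmt_16 (S : Matrix (Fin 2) (Fin 2) ℝ) (hS : S.PosDef)
    (hord : S 1 1 ≤ S 0 0) (t : ℝ) (ht0 : 0 ≤ t)
    (ht : t ≤ (S 0 0 - S 1 1) / S.det) :
    (S⁻¹ + diagonal ![t, 0])⁻¹ =
      (1 / (1 + S 0 0 * t)) • !![S 0 0, S 0 1; S 1 0, S 1 1 + S.det * t] ∧
    (![1, 1] : Fin 2 → ℝ) ⬝ᵥ ((S⁻¹ + diagonal ![t, 0])⁻¹ *ᵥ ![1, 1]) =
      (S 0 0 + S 1 1 + 2 * S 0 1 + S.det * t) / (1 + S 0 0 * t) := by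
  have hd : 0 < S.det := hS.det_pos
  have h00 : 0 < S 0 0 := by
    have := hS.diag_pos (i := 0)
    simpa [dotProduct, mulVec, Fin.sum_univ_two, Pi.single] using this
  have hpos : 0 < 1 + S 0 0 * t := by positivity
  have hinv : S⁻¹ = S.det⁻¹ • !![S 1 1, -S 0 1; -S 1 0, S 0 0] := by
    rw [Matrix.inv_def, Matrix.adjugate_fin_two, Ring.inverse_eq_inv]
  have hdet : S.det = S 0 0 * S 1 1 - S 0 1 * S 1 0 := Matrix.det_fin_two S
  have hdiag : (diagonal ![t, 0] : Matrix (Fin 2) (Fin 2) ℝ) = !![t, 0; 0, 0] := by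
    ext i j
    fin_cases i <;> fin_cases j <;> simp [Matrix.diagonal]
  have hmul : (S⁻¹ + diagonal ![t, 0]) *
      ((1 / (1 + S 0 0 * t)) • !![S 0 0, S 0 1; S 1 0, S 1 1 + S.det * t]) = 1 := by
    rw [hinv, hdiag]
    ext i j
    fin_cases i <;> fin_cases j <;>
      simp [Matrix.mul_apply, Fin.sum_univ_two, Matrix.one_apply] <;>
      field_simp <;> rw [hdet] <;> ring
  have h1 : (S⁻¹ + diagonal ![t, 0])⁻¹ =
      (1 / (1 + S 0 0 * t)) • !![S 0 0, S 0 1; S 1 0, S 1 1 + S.det * t] :=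
    Matrix.inv_eq_right_inv hmul
  refine ⟨h1, ?_⟩
  have hsym : S 1 0 = S 0 1 := by
    have := hS.1
    have h := congrFun (congrFun this 1) 0
    simpa [Matrix.conjTranspose_apply] using h.symm
  rw [h1]
  simp [dotProduct, mulVec, Fin.sum_univ_two, hsym]
  field_simp
  ring
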